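/- Suppose f = g - h and f' = g' - h' where g, h, g', h' : [0,1] → ℝ are each pointwise limits of pointwise increasing sequences of continuous functions. Then f + f', f - f', and f · f' can each be written as a difference of two functions that are pointwise limits of pointwise increasing sequences of continuous functions. -/

import Mathlib

open Filter Topology

/-- Pointwise limit on `[0,1]` of a pointwise increasing sequence of continuous functions. -/
def IsLSCLimit (f : ℝ → ℝ) : Prop :=
  ∃ pg : ℕ → ℝ → ℝ,
    (∀ n, ContinuousOn (pg n) (Set.Icc 0 1)) ∧
    (∀ n, ∀ x ∈ Set.Icc (0:ℝ) 1, pg n x ≤ pg (n + 1) x) ∧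
    (∀ x ∈ Set.Icc (0:ℝ) 1, Tendsto (fun n => pg n x) atTop (𝓝 (f x)))

/-- Nonnegative version: the approximating sequence can be chosen nonnegative on `[0,1]`. -/
def NNLim (f : ℝ → ℝ) : Prop :=
  ∃ pg : ℕ → ℝ → ℝ,
    (∀ n, ContinuousOn (pg n) (Set.Icc 0 1)) ∧
    (∀ n, ∀ x ∈ Set.Icc (0:ℝ) 1, 0 ≤ pg n x) ∧
    (∀ n, ∀ x ∈ Set.Icc (0:ℝ) 1, pg n x ≤ pg (n + 1) x) ∧
    (∀ x ∈ Set.Icc (0:ℝ) 1, Tendsto (fun n => pg n x) atTop (𝓝 (f x)))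

lemma NNLim.isLSCLimit {f : ℝ → ℝ} (h : NNLim f) : IsLSCLimit f := by
  obtain ⟨p, hc, _, hm, hl⟩ := h
  exact ⟨p, hc, hm, hl⟩

lemma IsLSCLimit.add {a b : ℝ → ℝ} (ha : IsLSCLimit a) (hb : IsLSCLimit b) :
    IsLSCLimit (fun x => a x + b x) := by
  obtain ⟨p, pc, pm, pl⟩ := ha
  obtain ⟨q, qc, qm, ql⟩ := hb
  refine ⟨fun n x => p n x + q n x, fun n => (pc n).add (qc n),
    fun n x hx => add_le_add (pm n x hx) (qm n x hx),
    fun x hx => (pl x hx).add (ql x hx)⟩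

lemma NNLim.mul {a b : ℝ → ℝ} (ha : NNLim a) (hb : NNLim b) :
    NNLim (fun x => a x * b x) := by
  obtain ⟨p, pc, pn, pm, pl⟩ := ha
  obtain ⟨q, qc, qn, qm, ql⟩ := hb
  refine ⟨fun n x => p n x * q n x, fun n => (pc n).mul (qc n),
    fun n x hx => mul_nonneg (pn n x hx) (qn n x hx),
    fun n x hx => mul_le_mul (pm n x hx) (qm n x hx) (qn n x hx)
      (le_trans (pn n x hx) (pm n x hx)),
    fun x hx => (pl x hx).mul (ql x hx)⟩

/-- A monotone step chain gives `p 0 ≤ p n`. -/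
lemma mono_chain {p : ℕ → ℝ → ℝ} (hm : ∀ n, ∀ x ∈ Set.Icc (0:ℝ) 1, p n x ≤ p (n + 1) x)
    (n : ℕ) (x : ℝ) (hx : x ∈ Set.Icc (0:ℝ) 1) : p 0 x ≤ p n x := by
  induction n with
  | zero => exact le_refl _
  | succ k ih => exact le_trans ih (hm k x hx)

lemma IsLSCLimit.shift {g : ℝ → ℝ} (hg : IsLSCLimit g) :
    ∃ C : ℝ, ∀ D : ℝ, C ≤ D → NNLim (fun x => g x + D) := by
  obtain ⟨p, pc, pm, pl⟩ := hg
  obtain ⟨x₀, hx₀, hmin⟩ := isCompact_Icc.exists_isMinOn (Set.nonempty_Icc.2 zero_le_one) (pc 0)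
  refine ⟨-(p 0 x₀), fun D hD => ?_⟩
  refine ⟨fun n x => p n x + D, fun n => (pc n).add continuousOn_const,
    fun n x hx => ?_,
    fun n x hx => add_le_add_left (pm n x hx) D,
    fun x hx => (pl x hx).add_const D⟩
  show 0 ≤ p n x + D
  have h1 : p 0 x₀ ≤ p 0 x := hmin hx
  have h2 : p 0 x ≤ p n x := mono_chain pm n x hx
  linarith

theorem stmt7 (f f' g h g' h' : ℝ → ℝ)
    (hg : IsLSCLimit g) (hh : IsLSCLimit h)
    (hg' : IsLSCLimit g') (hh' : IsLSCLimit h')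
    (hf : ∀ x ∈ Set.Icc (0:ℝ) 1, f x = g x - h x)
    (hf' : ∀ x ∈ Set.Icc (0:ℝ) 1, f' x = g' x - h' x)
    (hcf : ContinuousOn f (Set.Icc 0 1))
    (hcf' : ContinuousOn f' (Set.Icc 0 1)) :
    (∃ a b : ℝ → ℝ, IsLSCLimit a ∧ IsLSCLimit b ∧
      ∀ x ∈ Set.Icc (0:ℝ) 1, f x + f' x = a x - b x) ∧
    (∃ a b : ℝ → ℝ, IsLSCLimit a ∧ IsLSCLimit b ∧
      ∀ x ∈ Set.Icc (0:ℝ) 1, f x - f' x = a x - b x) ∧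
    (∃ a b : ℝ → ℝ, IsLSCLimit a ∧ IsLSCLimit b ∧
      ∀ x ∈ Set.Icc (0:ℝ) 1, f x * f' x = a x - b x) := by
  refine ⟨⟨fun x => g x + g' x, fun x => h x + h' x, hg.add hg', hh.add hh', fun x hx => by
      rw [hf x hx, hf' x hx]; ring⟩,
    ⟨fun x => g x + h' x, fun x => h x + g' x, hg.add hh', hh.add hg', fun x hx => by
      rw [hf x hx, hf' x hx]; ring⟩, ?_⟩
  obtain ⟨C₁, H₁⟩ := hg.shift
  obtain ⟨C₂, H₂⟩ := hh.shift
  obtain ⟨C₃, H₃⟩ := hg'.shift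
  obtain ⟨C₄, H₄⟩ := hh'.shift
  set D := max (max C₁ C₂) (max C₃ C₄) with hDdef
  have n1 : NNLim (fun x => g x + D) := H₁ D (le_trans (le_max_left _ _) (le_max_left _ _))
  have n2 : NNLim (fun x => h x + D) := H₂ D (le_trans (le_max_right _ _) (le_max_left _ _))
  have n3 : NNLim (fun x => g' x + D) := H₃ D (le_trans (le_max_left _ _) (le_max_right _ _))
  have n4 : NNLim (fun x => h' x + D) := H₄ D (le_trans (le_max_right _ _) (le_max_right _ _))
  refine ⟨fun x => (g x + D) * (g' x + D) + (h x + D) * (h' x + D),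
    fun x => (g x + D) * (h' x + D) + (h x + D) * (g' x + D),
    ((n1.mul n3).isLSCLimit).add ((n2.mul n4).isLSCLimit),
    ((n1.mul n4).isLSCLimit).add ((n2.mul n3).isLSCLimit),
    fun x hx => ?_⟩
  rw [hf x hx, hf' x hx]; ring
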